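/- Let X and Y be Hilbert spaces, T : X → Y a bounded linear operator with dim N(T) < ∞, with a least-squares projection approximation {(X_n, T_n)} that has kernel approximability. Set g_n := gap(P_{N(T)^⊥}(X_n), T*T(X_n)). Then there exists n* ∈ ℕ such that for all n ≥ n* and all y ∈ D(T†): ‖T_n† y − T† y‖ ≤ (1 − g_n²)^{−1/2} · dist(T† y, X_n). -/

import Mathlib

open Filter Topology Metric Submodule ContinuousLinearMap
open scoped RealInnerProductSpace

/-- Orthogonal projection onto a subspace `K` (as an operator `H →L[ℝ] H`),
defined whenever `K` admits orthogonal projections (e.g. `K` closed). -/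
noncomputable def orthProj {H : Type*} [NormedAddCommGroup H] [InnerProductSpace ℝ H]
    (K : Submodule ℝ H) : H →L[ℝ] H :=
  open scoped Classical in
  if h : HasOrthogonalProjection K then
    haveI := h
    K.subtypeL.comp (orthogonalProjection K)
  else 0

/-- `δ(M,N) = sup {dist(x,N) : x ∈ M, ‖x‖ = 1}` (0 if `M = {0}`, as `sSup ∅ = 0` in `ℝ`). -/
noncomputable def deltaSub {H : Type*} [NormedAddCommGroup H] [InnerProductSpace ℝ H]
    (M N : Submodule ℝ H) : ℝ :=
  sSup {d : ℝ | ∃ x ∈ M, ‖x‖ = 1 ∧ d = Metric.infDist x (N : Set H)}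

/-- The gap between two subspaces. -/
noncomputable def gapSub {H : Type*} [NormedAddCommGroup H] [InnerProductSpace ℝ H]
    (M N : Submodule ℝ H) : ℝ :=
  max (deltaSub M N) (deltaSub N M)

section Helpers
variable {H : Type*} [NormedAddCommGroup H] [InnerProductSpace ℝ H]

lemma orthProj_apply (K : Submodule ℝ H) [h : HasOrthogonalProjection K] (x : H) :
    orthProj K x = (orthogonalProjection K x : H) := by
  rw [orthProj, dif_pos h]; rfl

lemma orthProj_mem (K : Submodule ℝ H) [HasOrthogonalProjection K] (x : H) :
    orthProj K x ∈ K := by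
  rw [orthProj_apply]; exact (orthogonalProjection K x).2

lemma sub_orthProj_mem (K : Submodule ℝ H) [HasOrthogonalProjection K] (x : H) :
    x - orthProj K x ∈ Kᗮ := by
  rw [orthProj_apply]; exact K.sub_starProjection_mem_orthogonal x

lemma orthProj_eq_self (K : Submodule ℝ H) [HasOrthogonalProjection K] {x : H} (hx : x ∈ K) :
    orthProj K x = x := by
  rw [orthProj_apply]; exact K.starProjection_eq_self_iff.2 hx

lemma orthProj_eq_zero (K : Submodule ℝ H) [HasOrthogonalProjection K] {x : H} (hx : x ∈ Kᗮ) :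
    orthProj K x = 0 := by
  rw [orthProj_apply, orthogonalProjection_mem_subspace_orthogonalComplement_eq_zero hx]
  simp

lemma norm_orthProj_le (K : Submodule ℝ H) [HasOrthogonalProjection K] (x : H) :
    ‖orthProj K x‖ ≤ ‖x‖ := by
  rw [orthProj_apply]
  calc ‖(orthogonalProjection K x : H)‖ = ‖orthogonalProjection K x‖ := rfl
    _ ≤ ‖orthogonalProjection K‖ * ‖x‖ := (orthogonalProjection K).le_opNorm x
    _ ≤ 1 * ‖x‖ := mul_le_mul_of_nonneg_right (orthogonalProjection_norm_le K) (norm_nonneg x)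
    _ = ‖x‖ := one_mul _

lemma norm_sub_orthProj_le (K : Submodule ℝ H) [HasOrthogonalProjection K] (x : H) {y : H}
    (hy : y ∈ K) : ‖x - orthProj K x‖ ≤ ‖x - y‖ := by
  have h1 : x - y = (x - orthProj K x) + (orthProj K x - y) := by abel
  have h2 : ⟪x - orthProj K x, orthProj K x - y⟫ = 0 :=
    (Submodule.mem_orthogonal' K _).1 (sub_orthProj_mem K x) _
      (Submodule.sub_mem K (orthProj_mem K x) hy)
  have h3 : ‖x - y‖ ^ 2 = ‖x - orthProj K x‖ ^ 2 + ‖orthProj K x - y‖ ^ 2 := by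
    rw [h1, norm_add_sq_real, h2]; ring
  nlinarith [norm_nonneg (x - y), norm_nonneg (x - orthProj K x), sq_nonneg ‖orthProj K x - y‖]

lemma infDist_orthProj (K : Submodule ℝ H) [HasOrthogonalProjection K] (x : H) :
    Metric.infDist x (K : Set H) = ‖x - orthProj K x‖ := by
  refine le_antisymm ?_ ?_
  · have := Metric.infDist_le_dist_of_mem (x := x) (orthProj_mem K x)
    rwa [dist_eq_norm] at this
  · by_contra hlt
    push_neg at hlt
    obtain ⟨y, hyK, hy⟩ := (Metric.infDist_lt_iff ⟨0, K.zero_mem⟩).1 hlt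
    rw [dist_eq_norm] at hy
    exact absurd hy (not_lt.2 (norm_sub_orthProj_le K x hyK))

lemma deltaSub_nonneg (M N : Submodule ℝ H) : 0 ≤ deltaSub M N :=
  Real.sSup_nonneg (by rintro d ⟨x, -, -, rfl⟩; exact Metric.infDist_nonneg)

lemma deltaSub_bddAbove (M N : Submodule ℝ H) :
    BddAbove {d : ℝ | ∃ x ∈ M, ‖x‖ = 1 ∧ d = Metric.infDist x (N : Set H)} := by
  refine ⟨1, ?_⟩
  rintro d ⟨x, -, hx1, rfl⟩
  have := Metric.infDist_le_dist_of_mem (x := x) N.zero_mem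
  simpa [dist_eq_norm, hx1] using this

lemma infDist_le_deltaSub {M N : Submodule ℝ H} {x : H} (hx : x ∈ M) (hx1 : ‖x‖ = 1) :
    Metric.infDist x (N : Set H) ≤ deltaSub M N :=
  le_csSup (deltaSub_bddAbove M N) ⟨x, hx, hx1, rfl⟩

lemma deltaSub_lt_one (M N : Submodule ℝ H) [FiniteDimensional ℝ M]
    (h : ∀ x ∈ M, ‖x‖ = 1 → Metric.infDist x (N : Set H) < 1) : deltaSub M N < 1 := by
  have hset : {d : ℝ | ∃ x ∈ M, ‖x‖ = 1 ∧ d = Metric.infDist x (N : Set H)} =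
      (fun x : H => Metric.infDist x (N : Set H)) ''
        ((Subtype.val : M → H) '' Metric.sphere (0 : M) 1) := by
    ext d
    constructor
    · rintro ⟨x, hxM, hx1, rfl⟩
      exact ⟨x, ⟨⟨x, hxM⟩, by simpa [Metric.mem_sphere, dist_eq_norm] using hx1, rfl⟩, rfl⟩
    · rintro ⟨x, ⟨⟨x', hx'⟩, hs, rfl⟩, rfl⟩
      refine ⟨x', hx', ?_, rfl⟩
      simpa [Metric.mem_sphere, dist_eq_norm] using hs
  have hcomp : IsCompact ((fun x : H => Metric.infDist x (N : Set H)) ''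
      ((Subtype.val : M → H) '' Metric.sphere (0 : M) 1)) :=
    (((isCompact_sphere (0 : M) 1).image continuous_subtype_val).image
      (Metric.continuous_infDist_pt _))
  rw [deltaSub, hset]
  rcases Set.eq_empty_or_nonempty ((fun x : H => Metric.infDist x (N : Set H)) ''
      ((Subtype.val : M → H) '' Metric.sphere (0 : M) 1)) with he | hne
  · rw [he, Real.sSup_empty]; norm_num
  · have hmem := hcomp.sSup_mem hne
    obtain ⟨x, ⟨⟨x', hx'⟩, hs, rfl⟩, hval⟩ := hmem
    rw [← hval]
    exact h x' hx' (by simpa [Metric.mem_sphere, dist_eq_norm] using hs)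

lemma aux_lt_one {u b : H} (hu : ‖u‖ = 1) (hb : ⟪u, b⟫ ≠ 0) :
    ‖u - (⟪u, b⟫ / ‖b‖ ^ 2) • b‖ < 1 := by
  have hbne : b ≠ 0 := by rintro rfl; simp at hb
  have hbn : (0:ℝ) < ‖b‖ ^ 2 := pow_pos (norm_pos_iff.2 hbne) 2
  set c : ℝ := ⟪u, b⟫ / ‖b‖ ^ 2 with hc
  have hb2 : ‖b‖ ^ 2 ≠ 0 := ne_of_gt hbn
  have e1 : c * ⟪u, b⟫ = ⟪u, b⟫ ^ 2 / ‖b‖ ^ 2 := by rw [hc]; ring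
  have e2 : c ^ 2 * ‖b‖ ^ 2 = ⟪u, b⟫ ^ 2 / ‖b‖ ^ 2 := by
    rw [hc, div_pow]; field_simp
  have hpos : 0 < ⟪u, b⟫ ^ 2 / ‖b‖ ^ 2 := by
    apply div_pos _ hbn
    exact lt_of_le_of_ne (sq_nonneg _) (Ne.symm (pow_ne_zero 2 hb))
  have hns : ‖u - c • b‖ ^ 2 = 1 - ⟪u, b⟫ ^ 2 / ‖b‖ ^ 2 := by
    have h1 := norm_sub_sq_real u (c • b)
    rw [real_inner_smul_right, norm_smul, Real.norm_eq_abs, mul_pow, sq_abs] at h1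
    rw [h1, hu, e1, e2]; ring
  nlinarith [norm_nonneg (u - c • b)]

end Helpers

lemma eventually_ker_le {X : Type*} [NormedAddCommGroup X] [InnerProductSpace ℝ X]
    (N : Submodule ℝ X) [FiniteDimensional ℝ N] (Xn : ℕ → Submodule ℝ X)
    (h : ∀ x ∈ N, Tendsto (fun n => Metric.infDist x ((N ⊓ Xn n : Submodule ℝ X) : Set X))
      atTop (𝓝 0)) :
    ∃ n0 : ℕ, ∀ n ≥ n0, N ≤ Xn n := by
  classical
  set S : Set X := (Subtype.val : N → X) '' Metric.sphere (0 : N) 1 with hS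
  have hScomp : IsCompact S := (isCompact_sphere (0 : N) 1).image continuous_subtype_val
  have hSsub : ∀ x ∈ S, x ∈ N ∧ ‖x‖ = 1 := by
    rintro x ⟨⟨x', hx'⟩, hs, rfl⟩
    exact ⟨hx', by simpa [Metric.mem_sphere, dist_eq_norm] using hs⟩
  have hcover : S ⊆ ⋃ x ∈ S, Metric.ball x (1/2) := by
    intro x hx; exact Set.mem_biUnion hx (Metric.mem_ball_self (by norm_num))
  obtain ⟨t, htS, htfin, htcov⟩ := hScomp.elim_finite_subcover_image
    (fun x _ => Metric.isOpen_ball) hcover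
  have hev : ∀ᶠ n in atTop, ∀ x ∈ t,
      Metric.infDist x ((N ⊓ Xn n : Submodule ℝ X) : Set X) < 1/2 := by
    refine (Filter.eventually_all_finite htfin).2 ?_
    intro x hx
    exact (h x (hSsub x (htS hx)).1).eventually (gt_mem_nhds (by norm_num))
  obtain ⟨n0, hn0⟩ := Filter.eventually_atTop.1 hev
  refine ⟨n0, fun n hn => ?_⟩
  by_contra hle
  obtain ⟨ν, hνN, hνX⟩ := SetLike.not_le_iff_exists.1 hle
  set J : Submodule ℝ X := N ⊓ Xn n with hJ
  haveI : FiniteDimensional ℝ J := Submodule.finiteDimensional_of_le (inf_le_left : J ≤ N)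
  have hνJ : ν ∉ J := fun hmem => hνX hmem.2
  set μ : X := ν - orthProj J ν with hμ
  have hμN : μ ∈ N := N.sub_mem hνN ((inf_le_left : J ≤ N) (orthProj_mem J ν))
  have hμJ : μ ∈ Jᗮ := sub_orthProj_mem J ν
  have hμne : μ ≠ 0 := by
    intro h0
    apply hνJ
    have h1 : ν = orthProj J ν := by
      have := sub_eq_zero.1 (hμ ▸ h0)
      exact this
    rw [h1]; exact orthProj_mem J ν
  set μ' : X := ‖μ‖⁻¹ • μ with hμ'
  have hμ'N : μ' ∈ N := N.smul_mem _ hμN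
  have hμ'J : μ' ∈ Jᗮ := Submodule.smul_mem _ _ hμJ
  have hμ'1 : ‖μ'‖ = 1 := norm_smul_inv_norm (𝕜 := ℝ) hμne
  have hμ'S : μ' ∈ S := ⟨⟨μ', hμ'N⟩, by simpa [Metric.mem_sphere, dist_eq_norm] using hμ'1, rfl⟩
  obtain ⟨c, hct, hcball⟩ := Set.mem_iUnion₂.1 (htcov hμ'S)
  have hdist : dist μ' c < 1/2 := Metric.mem_ball.1 hcball
  have h1 : Metric.infDist μ' (J : Set X) ≤ Metric.infDist c (J : Set X) + dist μ' c :=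
    Metric.infDist_le_infDist_add_dist
  have h2 : Metric.infDist c (J : Set X) < 1/2 := hn0 n hn c hct
  have h3 : Metric.infDist μ' (J : Set X) = 1 := by
    rw [infDist_orthProj J μ', orthProj_eq_zero J hμ'J, sub_zero, hμ'1]
  clear hle
  linarith
variable {X Y : Type*} [NormedAddCommGroup X] [InnerProductSpace ℝ X] [CompleteSpace X]
  [NormedAddCommGroup Y] [InnerProductSpace ℝ Y] [CompleteSpace Y]

set_option maxHeartbeats 2000000 in
/-- Rate-of-convergence estimate under kernel approximability, `dim N(T) < ∞`:
`‖Tₙ†y − T†y‖ ≤ (1 − gₙ²)^(−1/2) · dist(T†y, Xₙ)` for large `n`. -/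
theorem stmt3
    (T : X →L[ℝ] Y) (Xn : ℕ → Submodule ℝ X)
    (hfin : ∀ n, FiniteDimensional ℝ (Xn n))
    (hinf : ¬ FiniteDimensional ℝ X)
    (hproj : ∀ x : X, Tendsto (fun n => orthProj (Xn n) x) atTop (𝓝 x))
    (Tn : ℕ → X →L[ℝ] Y) (hTn : ∀ n, Tn n = T.comp (orthProj (Xn n)))
    (Tdag : Y → X)
    (hTdag : ∀ y ∈ (LinearMap.range (T : X →ₗ[ℝ] Y) ⊔ (LinearMap.range (T : X →ₗ[ℝ] Y))ᗮ : Submodule ℝ Y),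
      Tdag y ∈ (LinearMap.ker (T : X →ₗ[ℝ] Y))ᗮ ∧
        T (Tdag y) = orthProj (LinearMap.range (T : X →ₗ[ℝ] Y)).topologicalClosure y)
    (Tdagn : ℕ → Y → X)
    (hTdagn : ∀ n (y : Y), Tdagn n y ∈ (LinearMap.ker (Tn n : X →ₗ[ℝ] Y))ᗮ ∧
      (Tn n) (Tdagn n y) = orthProj ((Xn n).map (T : X →ₗ[ℝ] Y)) y)
    (hker : FiniteDimensional ℝ (LinearMap.ker (T : X →ₗ[ℝ] Y)))
    (hKA : (∀ x : X, x ∈ LinearMap.ker (T : X →ₗ[ℝ] Y) ↔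
      Tendsto (fun n => Metric.infDist x ((LinearMap.ker (T : X →ₗ[ℝ] Y) ⊓ Xn n : Submodule ℝ X) : Set X))
        atTop (𝓝 0))) :
    ∃ nStar : ℕ, ∀ n ≥ nStar,
      ∀ y ∈ (LinearMap.range (T : X →ₗ[ℝ] Y) ⊔ (LinearMap.range (T : X →ₗ[ℝ] Y))ᗮ : Submodule ℝ Y),
        ‖Tdagn n y - Tdag y‖ ≤
          (Real.sqrt (1 - (gapSub ((Xn n).map ((orthProj ((LinearMap.ker (T : X →ₗ[ℝ] Y))ᗮ) : X →L[ℝ] X) : X →ₗ[ℝ] X)) ((Xn n).map (((ContinuousLinearMap.adjoint T).comp T : X →L[ℝ] X) : X →ₗ[ℝ] X))) ^ 2))⁻¹ * Metric.infDist (Tdag y) ((Xn n : Set X)) := by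
  classical
  haveI := hker
  obtain ⟨n0, hn0⟩ := eventually_ker_le (LinearMap.ker (T : X →ₗ[ℝ] Y)) Xn (fun x hx => (hKA x).1 hx)
  refine ⟨n0, fun n hn y hy => ?_⟩
  haveI := hfin n
  set N : Submodule ℝ X := LinearMap.ker (T : X →ₗ[ℝ] Y) with hN
  have hNX : N ≤ Xn n := hn0 n hn
  -- instances
  haveI : HasOrthogonalProjection (Xn n) := inferInstance
  haveI : HasOrthogonalProjection N := inferInstance
  haveI : HasOrthogonalProjection (Nᗮ) := inferInstance
  haveI hfinTXn : FiniteDimensional ℝ ((Xn n).map (T : X →ₗ[ℝ] Y)) :=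
    (inferInstance : FiniteDimensional ℝ ((Xn n).map (T : X →ₗ[ℝ] Y)))
  haveI : HasOrthogonalProjection ((Xn n).map (T : X →ₗ[ℝ] Y)) := inferInstance
  haveI : CompleteSpace ((LinearMap.range (T : X →ₗ[ℝ] Y)).topologicalClosure) :=
    (LinearMap.range (T : X →ₗ[ℝ] Y)).isClosed_topologicalClosure.completeSpace_coe
  haveI : HasOrthogonalProjection ((LinearMap.range (T : X →ₗ[ℝ] Y)).topologicalClosure) := inferInstance
  set M : Submodule ℝ X := (Xn n).map ((orthProj (Nᗮ) : X →L[ℝ] X) : X →ₗ[ℝ] X) with hM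
  set W : Submodule ℝ X := (Xn n).map (((ContinuousLinearMap.adjoint T).comp T : X →L[ℝ] X) : X →ₗ[ℝ] X) with hW
  haveI : FiniteDimensional ℝ M :=
    (inferInstance : FiniteDimensional ℝ ((Xn n).map ((orthProj (Nᗮ) : X →L[ℝ] X) : X →ₗ[ℝ] X)))
  haveI : FiniteDimensional ℝ W :=
    (inferInstance : FiniteDimensional ℝ
      ((Xn n).map (((ContinuousLinearMap.adjoint T).comp T : X →L[ℝ] X) : X →ₗ[ℝ] X)))
  haveI : HasOrthogonalProjection M := inferInstance
  haveI : HasOrthogonalProjection W := inferInstance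
  set xd : X := Tdag y with hxd
  set xn : X := Tdagn n y with hxn
  obtain ⟨hxdN, hxdT⟩ := hTdag y hy
  obtain ⟨hxnK, hxnT⟩ := hTdagn n y
  set e : X := xn - xd with he
  set g : ℝ := gapSub M W with hg
  -- xn ∈ Xn n
  have hXker : (Xn n)ᗮ ≤ LinearMap.ker (Tn n : X →ₗ[ℝ] Y) := by
    intro z hz
    rw [LinearMap.mem_ker, hTn n, ContinuousLinearMap.coe_coe, ContinuousLinearMap.comp_apply, orthProj_eq_zero (Xn n) hz,
      map_zero]
  have hxnX : xn ∈ Xn n := by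
    have h1 : (LinearMap.ker (Tn n : X →ₗ[ℝ] Y))ᗮ ≤ ((Xn n)ᗮ)ᗮ := Submodule.orthogonal_le hXker
    have h2 := h1 hxnK
    rwa [Submodule.orthogonal_orthogonal] at h2
  have hNker : N ≤ LinearMap.ker (Tn n : X →ₗ[ℝ] Y) := by
    intro ν hν
    rw [LinearMap.mem_ker, hTn n, ContinuousLinearMap.coe_coe, ContinuousLinearMap.comp_apply,
      orthProj_eq_self (Xn n) (hNX hν)]
    exact hν
  have hxnN : xn ∈ Nᗮ := (Submodule.orthogonal_le hNker) hxnK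
  have heN : e ∈ Nᗮ := Submodule.sub_mem _ hxnN hxdN
  have hTxn : T xn = Tn n xn := by
    rw [hTn n, ContinuousLinearMap.comp_apply, orthProj_eq_self (Xn n) hxnX]
  -- Galerkin orthogonality
  have hG : ∀ v ∈ Xn n, ⟪T xn - T xd, T v⟫ = 0 := by
    intro v hv
    have hTv : T v ∈ (Xn n).map (T : X →ₗ[ℝ] Y) := Submodule.mem_map_of_mem hv
    have hTvR : T v ∈ (LinearMap.range (T : X →ₗ[ℝ] Y)).topologicalClosure :=
      (LinearMap.range (T : X →ₗ[ℝ] Y)).le_topologicalClosure (LinearMap.mem_range_self (T : X →ₗ[ℝ] Y) v)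
    have key : T xn - T xd = (orthProj ((Xn n).map (T : X →ₗ[ℝ] Y)) y - y) +
        (y - orthProj (LinearMap.range (T : X →ₗ[ℝ] Y)).topologicalClosure y) := by
      rw [hTxn, hxnT, hxdT]; abel
    rw [key, inner_add_left]
    have h1 := (Submodule.mem_orthogonal' _ _).1 (sub_orthProj_mem ((Xn n).map (T : X →ₗ[ℝ] Y)) y) (T v) hTv
    have h2 := (Submodule.mem_orthogonal' _ _).1
      (sub_orthProj_mem ((LinearMap.range (T : X →ₗ[ℝ] Y)).topologicalClosure) y) (T v) hTvR
    have h1' : ⟪orthProj ((Xn n).map (T : X →ₗ[ℝ] Y)) y - y, T v⟫ = (0:ℝ) := by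
      rw [← neg_sub, inner_neg_left, h1, neg_zero]
    rw [h1', h2, add_zero]
  -- e ⟂ W
  have heW : ∀ w ∈ W, ⟪e, w⟫ = 0 := by
    intro w hw
    obtain ⟨v, hv, rfl⟩ := Submodule.mem_map.1 hw
    have hTe : T e = T xn - T xd := by rw [he, map_sub]
    calc ⟪e, ((ContinuousLinearMap.adjoint T).comp T) v⟫
        = ⟪e, (ContinuousLinearMap.adjoint T) (T v)⟫ := by
          rw [ContinuousLinearMap.comp_apply]
      _ = ⟪T e, T v⟫ := ContinuousLinearMap.adjoint_inner_right T e (T v)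
      _ = 0 := by rw [hTe]; exact hG v hv
  -- projection of xd on Xn
  set p : X := orthProj (Xn n) xd with hp
  have hpX : p ∈ Xn n := orthProj_mem (Xn n) xd
  have hD : Metric.infDist xd ((Xn n : Set X)) = ‖xd - p‖ := infDist_orthProj (Xn n) xd
  -- comparison element in M
  set m0 : X := orthProj (Nᗮ) (xn - p) with hm0
  have hm0M : m0 ∈ M := Submodule.mem_map_of_mem (Submodule.sub_mem _ hxnX hpX)
  have hem0 : e - m0 = -(orthProj (Nᗮ) (xd - p)) := by
    have h1 : orthProj (Nᗮ) (xn - p) = xn - orthProj (Nᗮ) p := by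
      rw [map_sub, orthProj_eq_self (Nᗮ) hxnN]
    rw [he, hm0, h1, map_sub, orthProj_eq_self (Nᗮ) hxdN]
    abel
  have hbound_em0 : ‖e - m0‖ ≤ ‖xd - p‖ := by
    rw [hem0, norm_neg]
    exact norm_orthProj_le (Nᗮ) (xd - p)
  -- projection of e on M
  set f : X := orthProj M e with hf
  have hfM : f ∈ M := orthProj_mem M e
  have hefM : e - f ∈ Mᗮ := sub_orthProj_mem M e
  have hPy : ‖e‖ ^ 2 = ‖f‖ ^ 2 + ‖e - f‖ ^ 2 := by
    have h0 : ⟪e - f, f⟫ = (0:ℝ) := (Submodule.mem_orthogonal' M (e - f)).1 hefM f hfM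
    have h1 := norm_add_sq_real (e - f) f
    rw [sub_add_cancel, h0] at h1
    linarith
  have hmin : ‖e - f‖ ≤ ‖xd - p‖ :=
    le_trans (norm_sub_orthProj_le M e hm0M) hbound_em0
  -- ‖f‖ ≤ g ‖e‖
  have hgnn : (0:ℝ) ≤ g := le_trans (deltaSub_nonneg M W) (le_max_left _ _)
  have hfg : ‖f‖ ≤ g * ‖e‖ := by
    rcases eq_or_ne f 0 with h | h
    · rw [h, norm_zero]; positivity
    · have hfpos : 0 < ‖f‖ := norm_pos_iff.2 h
      set fh : X := ‖f‖⁻¹ • f with hfh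
      have hfhM : fh ∈ M := Submodule.smul_mem _ _ hfM
      have hfh1 : ‖fh‖ = 1 := norm_smul_inv_norm (𝕜 := ℝ) h
      have hδ : Metric.infDist fh (W : Set X) ≤ deltaSub M W := infDist_le_deltaSub hfhM hfh1
      have hef : ⟪e, f⟫ = ‖f‖ ^ 2 := by
        have h1 : ⟪e - f, f⟫ = (0:ℝ) := (Submodule.mem_orthogonal' M (e - f)).1 hefM f hfM
        have h2 : ⟪e - f, f⟫ = ⟪e, f⟫ - ⟪f, f⟫ := inner_sub_left e f f
        have h3 : ⟪f, f⟫ = ‖f‖ ^ 2 := real_inner_self_eq_norm_sq f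
        rw [h1] at h2
        linarith
      have hPWf : orthProj W f ∈ W := orthProj_mem W f
      have h3 : ⟪e, f⟫ = ⟪e, f - orthProj W f⟫ := by
        rw [inner_sub_right, heW _ hPWf, sub_zero]
      have hfe : f = ‖f‖ • fh := by rw [hfh, smul_inv_smul₀ (ne_of_gt hfpos)]
      have h4 : ‖f - orthProj W f‖ = ‖f‖ * ‖fh - orthProj W fh‖ := by
        calc ‖f - orthProj W f‖ = ‖‖f‖ • fh - orthProj W (‖f‖ • fh)‖ := by rw [← hfe]
          _ = ‖‖f‖ • (fh - orthProj W fh)‖ := by rw [map_smul, smul_sub]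
          _ = ‖f‖ * ‖fh - orthProj W fh‖ := by
              rw [norm_smul, Real.norm_eq_abs, abs_of_pos hfpos]
      have h5 : ‖fh - orthProj W fh‖ ≤ g := by
        rw [← infDist_orthProj]
        exact le_trans hδ (le_max_left _ _)
      have h6 : ⟪e, f⟫ ≤ ‖e‖ * (‖f‖ * g) := by
        calc ⟪e, f⟫ = ⟪e, f - orthProj W f⟫ := h3
          _ ≤ ‖e‖ * ‖f - orthProj W f‖ := real_inner_le_norm _ _
          _ = ‖e‖ * (‖f‖ * ‖fh - orthProj W fh‖) := by rw [h4]
          _ ≤ ‖e‖ * (‖f‖ * g) := by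
              apply mul_le_mul_of_nonneg_left _ (norm_nonneg e)
              exact mul_le_mul_of_nonneg_left h5 (le_of_lt hfpos)
      have h7 : ‖f‖ ^ 2 ≤ ‖e‖ * (‖f‖ * g) := by rw [← hef]; exact h6
      nlinarith [hfpos]
  -- g < 1
  have hvmTT : ∀ v : X, T v = T (orthProj (Nᗮ) v) := by
    intro v
    have h1 : v - orthProj (Nᗮ) v ∈ (Nᗮ)ᗮ := sub_orthProj_mem (Nᗮ) v
    rw [Submodule.orthogonal_orthogonal] at h1
    have h2 : T (v - orthProj (Nᗮ) v) = 0 := h1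
    rw [map_sub, sub_eq_zero] at h2
    exact h2
  have hδ1 : deltaSub M W < 1 := by
    apply deltaSub_lt_one
    intro m hmM hm1
    obtain ⟨v, hv, rfl⟩ := Submodule.mem_map.1 hmM
    have hmN : orthProj (Nᗮ) v ∈ Nᗮ := orthProj_mem _ _
    have hTm : T (orthProj (Nᗮ) v) ≠ 0 := by
      intro h0
      have hmk : orthProj (Nᗮ) v ∈ N := h0
      have h00 : (orthProj (Nᗮ) v) = 0 :=
        inner_self_eq_zero.1 ((Submodule.mem_orthogonal' N _).1 hmN _ hmk)
      rw [ContinuousLinearMap.coe_coe, h00, norm_zero] at hm1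
      norm_num at hm1
    set b : X := ContinuousLinearMap.adjoint T (T (orthProj (Nᗮ) v)) with hb
    have hbW : b ∈ W := by
      refine Submodule.mem_map.2 ⟨v, hv, ?_⟩
      show (ContinuousLinearMap.adjoint T).comp T v = b
      rw [ContinuousLinearMap.comp_apply, hvmTT v, hb]
    have hinner : ⟪orthProj (Nᗮ) v, b⟫ ≠ (0:ℝ) := by
      rw [hb, ContinuousLinearMap.adjoint_inner_right]
      exact fun h0 => hTm (inner_self_eq_zero.1 h0)
    have hlt := aux_lt_one hm1 hinner
    have hcb : (⟪orthProj (Nᗮ) v, b⟫ / ‖b‖ ^ 2) • b ∈ W := Submodule.smul_mem _ _ hbW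
    calc Metric.infDist (orthProj (Nᗮ) v) (W : Set X)
        ≤ dist (orthProj (Nᗮ) v) ((⟪orthProj (Nᗮ) v, b⟫ / ‖b‖ ^ 2) • b) :=
          Metric.infDist_le_dist_of_mem hcb
      _ = ‖orthProj (Nᗮ) v - (⟪orthProj (Nᗮ) v, b⟫ / ‖b‖ ^ 2) • b‖ := dist_eq_norm _ _
      _ < 1 := hlt
  have hδ2 : deltaSub W M < 1 := by
    apply deltaSub_lt_one
    intro w hwW hw1
    obtain ⟨v, hv, rfl⟩ := Submodule.mem_map.1 hwW
    have hmM : orthProj (Nᗮ) v ∈ M := Submodule.mem_map_of_mem hv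
    have hw_eq : ((ContinuousLinearMap.adjoint T).comp T) v =
        ContinuousLinearMap.adjoint T (T (orthProj (Nᗮ) v)) := by
      rw [ContinuousLinearMap.comp_apply, hvmTT v]
    have hTm : T (orthProj (Nᗮ) v) ≠ 0 := by
      intro h0
      rw [ContinuousLinearMap.coe_coe, hw_eq, h0, map_zero] at hw1
      rw [norm_zero] at hw1
      norm_num at hw1
    have hinner : ⟪((ContinuousLinearMap.adjoint T).comp T) v, orthProj (Nᗮ) v⟫ ≠ (0:ℝ) := by
      rw [hw_eq, ContinuousLinearMap.adjoint_inner_left]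
      exact fun h0 => hTm (inner_self_eq_zero.1 h0)
    have hlt := aux_lt_one hw1 hinner
    have hcm : (⟪((ContinuousLinearMap.adjoint T).comp T) v, orthProj (Nᗮ) v⟫ /
        ‖orthProj (Nᗮ) v‖ ^ 2) • orthProj (Nᗮ) v ∈ M := Submodule.smul_mem _ _ hmM
    calc Metric.infDist (((ContinuousLinearMap.adjoint T).comp T) v) (M : Set X)
        ≤ dist (((ContinuousLinearMap.adjoint T).comp T) v)
            ((⟪((ContinuousLinearMap.adjoint T).comp T) v, orthProj (Nᗮ) v⟫ /
              ‖orthProj (Nᗮ) v‖ ^ 2) • orthProj (Nᗮ) v) :=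
          Metric.infDist_le_dist_of_mem hcm
      _ = ‖((ContinuousLinearMap.adjoint T).comp T) v -
            (⟪((ContinuousLinearMap.adjoint T).comp T) v, orthProj (Nᗮ) v⟫ /
              ‖orthProj (Nᗮ) v‖ ^ 2) • orthProj (Nᗮ) v‖ := dist_eq_norm _ _
      _ < 1 := hlt
  have hg1 : g < 1 := max_lt hδ1 hδ2
  -- conclude
  have h1mg : (0:ℝ) < 1 - g ^ 2 := by nlinarith
  have hsq : (0:ℝ) < Real.sqrt (1 - g ^ 2) := Real.sqrt_pos.2 h1mg
  have hf2 : ‖f‖ ^ 2 ≤ (g * ‖e‖) ^ 2 := pow_le_pow_left₀ (norm_nonneg f) hfg 2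
  have hm2 : ‖e - f‖ ^ 2 ≤ ‖xd - p‖ ^ 2 := pow_le_pow_left₀ (norm_nonneg _) hmin 2
  have hEbound : (1 - g ^ 2) * ‖e‖ ^ 2 ≤ ‖xd - p‖ ^ 2 := by nlinarith
  have hfinal : Real.sqrt (1 - g ^ 2) * ‖e‖ ≤ ‖xd - p‖ := by
    have h2 : (Real.sqrt (1 - g ^ 2) * ‖e‖) ^ 2 ≤ ‖xd - p‖ ^ 2 := by
      rw [mul_pow, Real.sq_sqrt (le_of_lt h1mg)]
      exact hEbound
    calc Real.sqrt (1 - g ^ 2) * ‖e‖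
        = Real.sqrt ((Real.sqrt (1 - g ^ 2) * ‖e‖) ^ 2) := (Real.sqrt_sq (by positivity)).symm
      _ ≤ Real.sqrt (‖xd - p‖ ^ 2) := Real.sqrt_le_sqrt h2
      _ = ‖xd - p‖ := Real.sqrt_sq (norm_nonneg _)
  rw [hD, inv_mul_eq_div, le_div_iff₀ hsq]
  calc ‖e‖ * Real.sqrt (1 - g ^ 2) = Real.sqrt (1 - g ^ 2) * ‖e‖ := mul_comm _ _
    _ ≤ ‖xd - p‖ := hfinal
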